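/- For distinct nonzero complex numbers t_1,...,t_n and s distinct from all t_i: sum over i of (product over j≠i of t_j/(t_i - t_j)) times (t_i/(s - t_i))^2 equals (sum over j of s/(s - t_j) minus 1) times product over i of t_i/(s - t_i). -/

import Mathlib

open Finset

/-- Partial fraction identity with a square:
`∑ i (∏_{j≠i} t_j/(t_i - t_j)) · (t_i/(s - t_i))² =
  (∑ j s/(s - t_j) - 1) · ∏ i t_i/(s - t_i)`
for distinct nonzero complex numbers `s, t_1, …, t_n`. -/
theorem sum_prod_partial_fraction_sq' (n : ℕ) (hn : 0 < n) (t : Fin n → ℂ) (s : ℂ)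
    (ht : ∀ i, t i ≠ 0) (hs : s ≠ 0) (hinj : Function.Injective t)
    (hst : ∀ i, s ≠ t i) :
    ∑ i, (∏ j ∈ univ.erase i, t j / (t i - t j)) * (t i / (s - t i)) ^ 2
      = ((∑ j, s / (s - t j)) - 1) * ∏ i, t i / (s - t i) := by
  classical
  have hsub : ∀ i, s - t i ≠ 0 := fun i => sub_ne_zero.mpr (hst i)
  have hQs : (∏ i, (s - t i)) ≠ 0 := prod_ne_zero_iff.mpr fun i _ => hsub i
  -- Step 0: sum of evaluated Lagrange basis polynomials is 1
  have hbasis : ∀ x : ℂ, ∑ i, ∏ j ∈ univ.erase i, (x - t j) / (t i - t j) = 1 := by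
    intro x
    have hne : (univ : Finset (Fin n)).Nonempty := univ_nonempty_iff.mpr ⟨⟨0, hn⟩⟩
    have h1 := Lagrange.sum_basis (s := univ) (v := t) hinj.injOn hne
    have h2 := congrArg (Polynomial.eval x) h1
    rw [Polynomial.eval_finset_sum, Polynomial.eval_one] at h2
    rw [← h2]
    refine sum_congr rfl fun i _ => ?_
    rw [Lagrange.basis, Polynomial.eval_prod]
    refine prod_congr rfl fun j hj => ?_
    simp [Lagrange.basisDivisor, div_eq_inv_mul]
  -- Step 1: partial fraction decomposition
  have hPF : ∀ x : ℂ, (∀ i, x ≠ t i) →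
      ∑ i, (∏ j ∈ univ.erase i, t j / (t i - t j)) * t i * (x - t i)⁻¹
        = (∏ i, t i) * (∏ i, (x - t i))⁻¹ := by
    intro x hx
    have hxs : ∀ i, x - t i ≠ 0 := fun i => sub_ne_zero.mpr (hx i)
    have hP : (∏ i, t i) * (∏ i, (x - t i))⁻¹ = ∏ i, t i / (x - t i) := by
      rw [prod_div_distrib]; ring
    rw [hP]
    have key : ∀ i : Fin n, (∏ j ∈ univ.erase i, t j / (t i - t j)) * t i * (x - t i)⁻¹
        = (∏ i, t i / (x - t i)) * ∏ j ∈ univ.erase i, (x - t j) / (t i - t j) := by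
      intro i
      rw [← mul_prod_erase univ (fun k => t k / (x - t k)) (mem_univ i)]
      rw [mul_assoc (t i / (x - t i)), ← prod_mul_distrib]
      have hterm : ∀ j ∈ univ.erase i, t j / (x - t j) * ((x - t j) / (t i - t j))
          = t j / (t i - t j) := by
        intro j hj
        rw [div_mul_div_comm, mul_comm (t j), mul_div_mul_left _ _ (hxs j)]
      rw [prod_congr rfl hterm, div_eq_mul_inv]
      ring
    rw [sum_congr rfl fun i _ => key i, ← mul_sum, hbasis, mul_one]
  -- Step 2: differentiate to get squared denominators
  have hS2 : ∑ i, (∏ j ∈ univ.erase i, t j / (t i - t j)) * t i * ((s - t i) ^ 2)⁻¹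
      = (∏ i, t i) * (∑ j, ∏ k ∈ univ.erase j, (s - t k)) * ((∏ i, (s - t i)) ^ 2)⁻¹ := by
    set A : Fin n → ℂ := fun i => ∏ j ∈ univ.erase i, t j / (t i - t j) with hA
    set C : ℂ := ∏ i, t i with hC
    have hLd : HasDerivAt (fun x => ∑ i, A i * t i * (x - t i)⁻¹)
        (∑ i, A i * t i * (-1 / (s - t i) ^ 2)) s := by
      refine HasDerivAt.fun_sum fun i _ => ?_
      exact (((hasDerivAt_id s).sub_const (t i)).inv (hsub i)).const_mul (A i * t i)
    have hQd : HasDerivAt (fun x => ∏ i, (x - t i))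
        (∑ j, ∏ k ∈ univ.erase j, (s - t k)) s := by
      have h := HasDerivAt.fun_finset_prod (u := univ) (f := fun i x => x - t i)
        (f' := fun _ => (1 : ℂ)) (x := s) (fun i _ => (hasDerivAt_id s).sub_const (t i))
      simpa using h
    have hPd : HasDerivAt (fun x => C * (∏ i, (x - t i))⁻¹)
        (C * (-(∑ j, ∏ k ∈ univ.erase j, (s - t k)) / (∏ i, (s - t i)) ^ 2)) s :=
      (hQd.inv hQs).const_mul C
    have hEq : (fun x => ∑ i, A i * t i * (x - t i)⁻¹)
        =ᶠ[nhds s] fun x => C * (∏ i, (x - t i))⁻¹ := by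
      have hopen : IsOpen {x : ℂ | ∀ i, x ≠ t i} := by
        have he : {x : ℂ | ∀ i, x ≠ t i} = ⋂ i, {t i}ᶜ := by
          ext y; simp [Set.mem_iInter]
        rw [he]
        exact isOpen_iInter_of_finite fun i => isOpen_compl_singleton
      filter_upwards [hopen.mem_nhds (fun i => hst i)] with x hx using hPF x hx
    have hderiv : (∑ i, A i * t i * (-1 / (s - t i) ^ 2))
        = C * (-(∑ j, ∏ k ∈ univ.erase j, (s - t k)) / (∏ i, (s - t i)) ^ 2) :=
      hLd.deriv.symm.trans (hEq.deriv_eq.trans hPd.deriv)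
    have hneg := congrArg Neg.neg hderiv
    rw [← Finset.sum_neg_distrib] at hneg
    calc ∑ i, A i * t i * ((s - t i) ^ 2)⁻¹
        = ∑ i, -(A i * t i * (-1 / (s - t i) ^ 2)) := by
          refine sum_congr rfl fun i _ => ?_; field_simp
      _ = -(C * (-(∑ j, ∏ k ∈ univ.erase j, (s - t k)) / (∏ i, (s - t i)) ^ 2)) := hneg
      _ = C * (∑ j, ∏ k ∈ univ.erase j, (s - t k)) * ((∏ i, (s - t i)) ^ 2)⁻¹ := by
          field_simp
  -- Final assembly
  have hPFs := hPF s hst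
  have hProd : (∏ i, t i / (s - t i)) = (∏ i, t i) * (∏ i, (s - t i))⁻¹ := by
    rw [prod_div_distrib]; ring
  have hsplit : ∀ i : Fin n, (∏ j ∈ univ.erase i, t j / (t i - t j)) * (t i / (s - t i)) ^ 2
      = s * ((∏ j ∈ univ.erase i, t j / (t i - t j)) * t i * ((s - t i) ^ 2)⁻¹)
        - (∏ j ∈ univ.erase i, t j / (t i - t j)) * t i * (s - t i)⁻¹ := by
    intro i
    have hq : (t i / (s - t i)) ^ 2 = s * (t i * ((s - t i) ^ 2)⁻¹) - t i * (s - t i)⁻¹ := by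
      field_simp [hsub i]
      ring
    rw [hq]
    ring
  rw [sum_congr rfl fun i _ => hsplit i, sum_sub_distrib, ← mul_sum, hS2, hPFs, hProd]
  have hmain : s * ((∏ i, t i) * (∑ j, ∏ k ∈ univ.erase j, (s - t k)) * ((∏ i, (s - t i)) ^ 2)⁻¹)
      = (∑ j, s / (s - t j)) * ((∏ i, t i) * (∏ i, (s - t i))⁻¹) := by
    simp only [Finset.mul_sum, Finset.sum_mul]
    refine sum_congr rfl fun j _ => ?_
    have hQsj : (∏ i, (s - t i)) = (s - t j) * ∏ k ∈ univ.erase j, (s - t k) :=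
      (mul_prod_erase univ _ (mem_univ j)).symm
    have hEj : (∏ k ∈ univ.erase j, (s - t k)) ≠ 0 :=
      prod_ne_zero_iff.mpr fun k _ => hsub k
    rw [hQsj]
    field_simp [hsub j, hEj]
  rw [hmain]
  ring
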